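/- Vanishing curvature for pure gauge: if f = x⁻¹ where x is the quaternionic 0-form with coefficients κ = k₁ + k₂𝐢 + k₃𝐣 + k₄𝐤 ≠ 0, and A = x⁻¹ ∪ d^c x, then the discrete curvature F = d^c A + A ∪ A equals 0. -/

import Mathlib

/-- Multi-indices `k = (k₁,k₂,k₃,k₄)` of the complex `K(4)`. -/
abbrev Idx := Fin 4 → ℤ

/-- The shift operator `τ_i` incrementing the `i`-th index. -/
def tau (i : Fin 4) (k : Idx) : Idx := Function.update k i (k i + 1)

/-- The quaternion `κ = k₁ + k₂𝐢 + k₃𝐣 + k₄𝐤`, the coefficient of the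
quaternionic 0-form `x` at index `k`. -/
noncomputable def kappa (k : Idx) : Quaternion ℝ := ⟨k 0, k 1, k 2, k 3⟩

/-- The pure gauge connection `A = x⁻¹ ∪ d^c x`: its components are
`A^i_k = κ_k⁻¹ (κ_{τ_i k} - κ_k)`. -/
noncomputable def pureGauge (k : Idx) (i : Fin 4) : Quaternion ℝ :=
  (kappa k)⁻¹ * (kappa (tau i k) - kappa k)

lemma tau_comm (i j : Fin 4) (k : Idx) : tau i (tau j k) = tau j (tau i k) := by
  by_cases hij : i = j
  · subst hij; rfl
  · simp only [tau]
    rw [Function.update_of_ne hij, Function.update_of_ne (fun h => hij h.symm),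
      Function.update_comm hij]

lemma key (a b c d : Quaternion ℝ) (ha : a ≠ 0) (hb : b ≠ 0) (hc : c ≠ 0) :
    (b⁻¹ * (d - b) - a⁻¹ * (c - a)) - (c⁻¹ * (d - c) - a⁻¹ * (b - a))
      + (a⁻¹ * (b - a)) * (b⁻¹ * (d - b))
      - (a⁻¹ * (c - a)) * (c⁻¹ * (d - c)) = 0 := by
  have hab : a⁻¹ * (b - a) * b⁻¹ = a⁻¹ - b⁻¹ := by
    rw [mul_sub, sub_mul, mul_assoc, mul_inv_cancel₀ hb, inv_mul_cancel₀ ha,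
      mul_one, one_mul]
  have hac : a⁻¹ * (c - a) * c⁻¹ = a⁻¹ - c⁻¹ := by
    rw [mul_sub, sub_mul, mul_assoc, mul_inv_cancel₀ hc, inv_mul_cancel₀ ha,
      mul_one, one_mul]
  calc (b⁻¹ * (d - b) - a⁻¹ * (c - a)) - (c⁻¹ * (d - c) - a⁻¹ * (b - a))
      + (a⁻¹ * (b - a)) * (b⁻¹ * (d - b))
      - (a⁻¹ * (c - a)) * (c⁻¹ * (d - c))
      = (b⁻¹ * (d - b) - a⁻¹ * (c - a)) - (c⁻¹ * (d - c) - a⁻¹ * (b - a))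
      + ((a⁻¹ - b⁻¹)) * (d - b)
      - ((a⁻¹ - c⁻¹)) * (d - c) := by rw [← hab, ← hac]; noncomm_ring
    _ = 0 := by
      simp only [mul_sub, sub_mul, inv_mul_cancel₀ ha, inv_mul_cancel₀ hb,
        inv_mul_cancel₀ hc]
      noncomm_ring

/-- Vanishing curvature for pure gauge: for `A = x⁻¹ ∪ d^c x` (at indices where
`κ ≠ 0`) the discrete curvature `F = d^c A + A ∪ A` vanishes, in components
`F^{ij}_k = Δ_i A^j_k - Δ_j A^i_k + A^i_k A^j_{τ_i k} - A^j_k A^i_{τ_j k} = 0`. -/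
theorem pureGauge_curvature_zero (k : Idx) (i j : Fin 4)
    (h0 : kappa k ≠ 0) (hi : kappa (tau i k) ≠ 0) (hj : kappa (tau j k) ≠ 0)
    (hij : kappa (tau i (tau j k)) ≠ 0) :
    (pureGauge (tau i k) j - pureGauge k j) - (pureGauge (tau j k) i - pureGauge k i)
      + pureGauge k i * pureGauge (tau i k) j
      - pureGauge k j * pureGauge (tau j k) i = 0 := by
  simp only [pureGauge, tau_comm j i]
  exact key (kappa k) (kappa (tau i k)) (kappa (tau j k)) (kappa (tau i (tau j k))) h0 hi hj
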